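/- Let X be a sober topological space with countable open set lattice O(X). If O(X) is an algebraic lattice, then the dual of the specialization order on X, (X, ≥), is a quasialgebraic poset. -/

import Mathlib

open Set

section RelDefs
variable {α : Type*} (r : α → α → Prop)

/-- `D` is a (nonempty) directed subset with respect to the relation `r`. -/
def DirOn (D : Set α) : Prop :=
  D.Nonempty ∧ ∀ a ∈ D, ∀ b ∈ D, ∃ c ∈ D, r a c ∧ r b c

/-- `s` is a least upper bound of `D` with respect to `r`. -/
def IsLubR (D : Set α) (s : α) : Prop :=
  (∀ d ∈ D, r d s) ∧ ∀ u, (∀ d ∈ D, r d u) → r s u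

/-- `x` is way-below `y` with respect to `r`. -/
def WB (x y : α) : Prop :=
  ∀ D : Set α, DirOn r D → ∀ s, IsLubR r D s → r y s → ∃ d ∈ D, r x d

/-- Every directed subset has a least upper bound (dcpo property). -/
def DcpoRel : Prop := ∀ D : Set α, DirOn r D → ∃ s, IsLubR r D s

/-- Continuity: every element is the directed least upper bound of the elements way-below it. -/
def ContinuousRel : Prop :=
  ∀ y, DirOn r {x | WB r x y} ∧ IsLubR r {x | WB r x y} y

/-- Algebraicity: every element is the directed least upper bound of
the compact elements (`WB r x x`) below it. -/
def AlgebraicRel : Prop :=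
  ∀ y, DirOn r {x | WB r x x ∧ r x y} ∧ IsLubR r {x | WB r x x ∧ r x y} y

/-- Upper set generated by `F` with respect to `r`. -/
def UpS (F : Set α) : Set α := {x | ∃ f ∈ F, r f x}

/-- The set `F` is way-below the set `G` with respect to `r`. -/
def SetWB (F G : Set α) : Prop :=
  ∀ D : Set α, DirOn r D → ∀ s, IsLubR r D s → s ∈ UpS r G → ∃ d ∈ D, d ∈ UpS r F

/-- Finite sets way-below `x`. -/
def FinFam (x : α) : Set (Finset α) := {F | SetWB r (F : Set α) {x}}

/-- Finite sets `F` with `F ≪ F ≪ x`. -/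
def FinFamC (x : α) : Set (Finset α) :=
  {F | SetWB r (F : Set α) (F : Set α) ∧ SetWB r (F : Set α) {x}}

/-- Directedness of a family of finite sets in the Smyth preorder
(`F ⊑ G` iff `G ⊆ ↑F`). -/
def SmythDirected (S : Set (Finset α)) : Prop :=
  S.Nonempty ∧ ∀ F ∈ S, ∀ G ∈ S, ∃ H ∈ S,
    (H : Set α) ⊆ UpS r (F : Set α) ∧ (H : Set α) ⊆ UpS r (G : Set α)

/-- Quasicontinuity with respect to `r`. -/
def QuasicontinuousRel : Prop :=
  ∀ x, SmythDirected r (FinFam r x) ∧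
    UpS r {x} = ⋂ F ∈ FinFam r x, UpS r (F : Set α)

/-- Quasialgebraicity with respect to `r`. -/
def QuasialgebraicRel : Prop :=
  ∀ x, SmythDirected r (FinFamC r x) ∧
    UpS r {x} = ⋂ F ∈ FinFamC r x, UpS r (F : Set α)

/-- `U` is Scott open with respect to `r`: an upper set inaccessible by
least upper bounds of directed sets. -/
def IsScottOpenRel (U : Set α) : Prop :=
  (∀ x ∈ U, ∀ y, r x y → y ∈ U) ∧
    ∀ D : Set α, DirOn r D → ∀ s, IsLubR r D s → s ∈ U → ∃ d ∈ D, d ∈ U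

end RelDefs

section Spec
variable {X : Type*} [TopologicalSpace X]

/-- The specialization order: `x ≤ y` iff `x ∈ cl {y}`. -/
def sle (x y : X) : Prop := x ∈ closure ({y} : Set X)

/-- The maximal elements of `C` with respect to the specialization order. -/
def maxSpec (C : Set X) : Set X := {c | c ∈ C ∧ ∀ y ∈ C, sle c y → sle y c}

end Spec

section StmtEightProofs

open Set

variable {X : Type*} [TopologicalSpace X]

lemma sle_refl' (x : X) : sle x x := subset_closure rfl

lemma sle_trans' {x y z : X} (h1 : sle x y) (h2 : sle y z) : sle x z :=
  closure_minimal (Set.singleton_subset_iff.mpr h2) isClosed_closure h1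

lemma sle_antisymm' [T0Space X] {x y : X} (h1 : sle x y) (h2 : sle y x) : x = y := by
  have hxy : y ⤳ x := specializes_iff_mem_closure.mpr h1
  have hyx : x ⤳ y := specializes_iff_mem_closure.mpr h2
  exact (hyx.antisymm hxy).eq

lemma sle_mem_open {U : Set X} (hU : IsOpen U) {x y : X} (hxy : sle x y) (hx : x ∈ U) :
    y ∈ U := by
  obtain ⟨w, hwU, hwy⟩ := mem_closure_iff.mp hxy U hU hx
  rw [Set.mem_singleton_iff] at hwy
  rwa [hwy] at hwU

lemma sle_mem_closed {A : Set X} (hA : IsClosed A) {x y : X} (hy : y ∈ A) (hxy : sle x y) :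
    x ∈ A :=
  closure_minimal (Set.singleton_subset_iff.mpr hy) hA hxy

lemma mem_UpS_iff {S : Set X} {z : X} :
    z ∈ UpS (fun x y : X => sle y x) S ↔ ∃ f ∈ S, sle z f := Iff.rfl

lemma UpS_eq_biUnion (S : Set X) :
    UpS (fun x y : X => sle y x) S = ⋃ f ∈ S, closure ({f} : Set X) := by
  ext z
  simp only [mem_UpS_iff, Set.mem_iUnion, exists_prop]
  exact Iff.rfl

lemma isClosed_UpS {S : Set X} (hS : S.Finite) :
    IsClosed (UpS (fun x y : X => sle y x) S) := by
  rw [UpS_eq_biUnion]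
  exact hS.isClosed_biUnion fun _ _ => isClosed_closure

lemma chain_ub [QuasiSober X] {A : Set X} (hA : IsClosed A) {c : Set X} (hc : c ⊆ A)
    (hchain : ∀ a ∈ c, ∀ b ∈ c, sle a b ∨ sle b a) (hne : c.Nonempty) :
    ∃ g ∈ A, ∀ z ∈ c, sle z g := by
  have hpre : IsPreirreducible c := by
    rintro u v hu hv ⟨z1, hz1c, hz1u⟩ ⟨z2, hz2c, hz2v⟩
    rcases hchain z1 hz1c z2 hz2c with h | h
    · exact ⟨z2, hz2c, sle_mem_open hu h hz1u, hz2v⟩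
    · exact ⟨z1, hz1c, hz1u, sle_mem_open hv h hz2v⟩
  obtain ⟨g, hg⟩ := QuasiSober.sober ⟨hne.closure, hpre.closure⟩ isClosed_closure
  have hg' : closure ({g} : Set X) = closure c := hg
  have hgc : g ∈ closure c := by rw [← hg']; exact subset_closure rfl
  refine ⟨g, closure_minimal hc hA hgc, fun z hz => ?_⟩
  have hzc : z ∈ closure c := subset_closure hz
  rwa [← hg'] at hzc

lemma exists_max_spec [T0Space X] [QuasiSober X] {A : Set X} (hA : IsClosed A) {x : X}
    (hx : x ∈ A) : ∃ m ∈ maxSpec A, sle x m := by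
  letI : Preorder X :=
    { le := sle
      le_refl := sle_refl'
      le_trans := fun _ _ _ => sle_trans' }
  have ih : ∀ c ⊆ A, IsChain (· ≤ ·) c → ∀ y ∈ c, ∃ ub ∈ A, ∀ z ∈ c, z ≤ ub := by
    intro c hcA hchain y hy
    exact chain_ub hA hcA
      (fun a ha b hb => (eq_or_ne a b).elim (fun h => h ▸ Or.inl (sle_refl' a))
        (hchain ha hb)) ⟨y, hy⟩
  obtain ⟨m, hxm, hm⟩ := zorn_le_nonempty₀ A ih x hx
  exact ⟨m, ⟨hm.1, fun y hy hmy => hm.2 hy hmy⟩, hxm⟩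

lemma maxSpec_finite [T0Space X] [QuasiSober X] (hcnt : {U : Set X | IsOpen U}.Countable)
    {A : Set X} (hA : IsClosed A) : (maxSpec A).Finite := by
  by_contra hinf'
  have hinf : (maxSpec A).Infinite := hinf'
  set M := maxSpec A with hMdef
  have hanti : ∀ a ∈ M, ∀ b ∈ M, sle a b → a = b := by
    intro a ha b hb hab
    exact sle_antisymm' hab (ha.2 b hb.1 hab)
  by_cases hirr : ∃ T ⊆ M, T.Infinite ∧ IsPreirreducible T
  · obtain ⟨T, hTM, hTinf, hTpre⟩ := hirr
    obtain ⟨g, hg⟩ := QuasiSober.sober ⟨hTinf.nonempty.closure, hTpre.closure⟩ isClosed_closure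
    have hg' : closure ({g} : Set X) = closure T := hg
    have hgA : g ∈ A := by
      have hgc : g ∈ closure T := by rw [← hg']; exact subset_closure rfl
      exact closure_minimal (fun z hz => (hTM hz).1) hA hgc
    have heq : ∀ a ∈ T, a = g := by
      intro a ha
      have h1 : sle a g := by
        have haT : a ∈ closure T := subset_closure ha
        rwa [← hg'] at haT
      exact sle_antisymm' h1 ((hTM ha).2 g hgA h1)
    obtain ⟨a, ha, b, hb, hab⟩ := hTinf.nontrivial
    exact hab ((heq a ha).trans (heq b hb).symm)
  · push_neg at hirr
    have hstep : ∀ T : Set X, T ⊆ M → T.Infinite →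
        ∃ d : X, ∃ W : Set X, ∃ T' : Set X,
          IsOpen W ∧ d ∈ W ∧ d ∈ T ∧ T' ⊆ T ∧ T'.Infinite ∧ W ∩ T' = ∅ := by
      intro T hTM hTinf
      have hni : ¬ ∀ u v : Set X, IsOpen u → IsOpen v → (T ∩ u).Nonempty →
          (T ∩ v).Nonempty → (T ∩ (u ∩ v)).Nonempty := hirr T hTM hTinf
      push_neg at hni
      obtain ⟨u, v, hu, hv, hTu, hTv, hTuv⟩ := hni
      have hcover : T ⊆ (T \ u) ∪ (T \ v) := by
        intro t ht
        by_cases htu : t ∈ u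
        · by_cases htv : t ∈ v
          · exact absurd (show t ∈ T ∩ (u ∩ v) from ⟨ht, htu, htv⟩)
              (by rw [hTuv]; exact Set.notMem_empty t)
          · exact Or.inr ⟨ht, htv⟩
        · exact Or.inl ⟨ht, htu⟩
      have hor : (T \ u).Infinite ∨ (T \ v).Infinite := by
        by_contra hb
        push_neg at hb
        exact hTinf (Set.Finite.subset (hb.1.union hb.2) hcover)
      rcases hor with h | h
      · obtain ⟨d, hdT, hdu⟩ := hTu
        exact ⟨d, u, T \ u, hu, hdu, hdT, Set.diff_subset, h,
          Set.eq_empty_iff_forall_notMem.mpr fun z hz => hz.2.2 hz.1⟩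
      · obtain ⟨d, hdT, hdv⟩ := hTv
        exact ⟨d, v, T \ v, hv, hdv, hdT, Set.diff_subset, h,
          Set.eq_empty_iff_forall_notMem.mpr fun z hz => hz.2.2 hz.1⟩
    obtain ⟨x0, hx0⟩ := hinf.nonempty
    have hstep' : ∀ T : Set X, ∃ d : X, ∃ W : Set X, ∃ T' : Set X,
        T ⊆ M → T.Infinite →
          (IsOpen W ∧ d ∈ W ∧ d ∈ T ∧ T' ⊆ T ∧ T'.Infinite ∧ W ∩ T' = ∅) := by
      intro T
      by_cases hT : T ⊆ M ∧ T.Infinite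
      · obtain ⟨d, W, T', hw⟩ := hstep T hT.1 hT.2
        exact ⟨d, W, T', fun _ _ => hw⟩
      · exact ⟨x0, ∅, ∅, fun hh1 hh2 => absurd ⟨hh1, hh2⟩ hT⟩
    choose fd fW fT hprop using hstep'
    set seq : ℕ → Set X := fun n => fT^[n] M with hseqdef
    have hseq_succ : ∀ n, seq (n + 1) = fT (seq n) := fun n =>
      Function.iterate_succ_apply' fT n M
    have hseq : ∀ n, seq n ⊆ M ∧ (seq n).Infinite := by
      intro n
      induction n with
      | zero => exact ⟨subset_rfl, hinf⟩
      | succ k ih =>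
        rw [hseq_succ k]
        exact ⟨((hprop (seq k) ih.1 ih.2).2.2.2.1).trans ih.1, (hprop (seq k) ih.1 ih.2).2.2.2.2.1⟩
    have hmono : ∀ m n : ℕ, m ≤ n → seq n ⊆ seq m := by
      intro m n h
      induction n with
      | zero => rw [Nat.le_zero.mp h]
      | succ k ih =>
        rcases Nat.lt_or_ge m (k + 1) with hlt | hge
        · have hsub : seq (k + 1) ⊆ seq k := by
            rw [hseq_succ k]
            exact (hprop (seq k) (hseq k).1 (hseq k).2).2.2.2.1
          exact hsub.trans (ih (Nat.lt_succ_iff.mp hlt))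
        · rw [le_antisymm h hge]
    set d : ℕ → X := fun n => fd (seq n) with hddef
    have hd_mem : ∀ n, d n ∈ seq n := fun n => (hprop (seq n) (hseq n).1 (hseq n).2).2.2.1
    have hd_M : ∀ n, d n ∈ M := fun n => (hseq n).1 (hd_mem n)
    have hdW : ∀ n, d n ∈ fW (seq n) := fun n => (hprop (seq n) (hseq n).1 (hseq n).2).2.1
    have hWopen : ∀ n, IsOpen (fW (seq n)) := fun n => (hprop (seq n) (hseq n).1 (hseq n).2).1
    have hdisj : ∀ n, fW (seq n) ∩ seq (n + 1) = ∅ := by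
      intro n
      rw [hseq_succ n]
      exact (hprop (seq n) (hseq n).1 (hseq n).2).2.2.2.2.2
    have hW_not : ∀ m n : ℕ, m < n → d n ∉ fW (seq m) := by
      intro m n hmn hdn
      have hdn' : d n ∈ seq (m + 1) := hmono (m + 1) n hmn (hd_mem n)
      have : d n ∈ fW (seq m) ∩ seq (m + 1) := ⟨hdn, hdn'⟩
      rw [hdisj m] at this
      exact this
    have hne : ∀ m n : ℕ, m < n → d n ≠ d m := by
      intro m n hmn heq
      exact hW_not m n hmn (heq ▸ hdW m)
    set V : ℕ → Set X := fun n =>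
      fW (seq n) \ ⋃ m ∈ Finset.range n, closure ({d m} : Set X) with hVdef
    have hVopen : ∀ n, IsOpen (V n) :=
      fun n => (hWopen n).sdiff (isClosed_biUnion_finset fun _ _ => isClosed_closure)
    have hdV : ∀ n, d n ∈ V n := by
      intro n
      refine ⟨hdW n, ?_⟩
      intro hmem
      simp only [Set.mem_iUnion, exists_prop, Finset.mem_range] at hmem
      obtain ⟨m, hmn, hdm⟩ := hmem
      exact hne m n hmn (hanti (d n) (hd_M n) (d m) (hd_M m) hdm)
    have hVd : ∀ k n : ℕ, d k ∈ V n → k = n := by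
      intro k n hk
      rcases lt_trichotomy k n with h | h | h
      · exfalso
        apply hk.2
        simp only [Set.mem_iUnion, exists_prop, Finset.mem_range]
        exact ⟨k, h, subset_closure rfl⟩
      · exact h
      · exact absurd hk.1 (hW_not n k h)
    haveI := hcnt.to_subtype
    set Φ : Set ℕ → {U : Set X // U ∈ {U : Set X | IsOpen U}} := fun s =>
      ⟨⋃ n ∈ s, V n, isOpen_biUnion fun n _ => hVopen n⟩ with hΦdef
    have hmemΦ : ∀ (s : Set ℕ) (k : ℕ), d k ∈ (Φ s).1 ↔ k ∈ s := by
      intro s k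
      constructor
      · intro h
        obtain ⟨n, hn, hmem⟩ := Set.mem_iUnion₂.mp h
        obtain rfl := hVd k n hmem
        exact hn
      · intro h
        exact Set.mem_biUnion h (hdV k)
    have hΦinj : Function.Injective Φ := by
      intro s t hst
      ext k
      rw [← hmemΦ s k, ← hmemΦ t k, hst]
    haveI : Countable (Set ℕ) := hΦinj.countable
    obtain ⟨f, hf⟩ := exists_injective_nat (Set ℕ)
    exact Function.cantor_injective f hf

lemma exists_cpt_nbhd (halg : AlgebraicRel (fun U V : {U : Set X // IsOpen U} => U.1 ⊆ V.1))
    {o : Set X} (ho : IsOpen o) {z : X} (hz : z ∈ o) :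
    ∃ K : {U : Set X // IsOpen U},
      WB (fun U V : {U : Set X // IsOpen U} => U.1 ⊆ V.1) K K ∧ K.1 ⊆ o ∧ z ∈ K.1 := by
  obtain ⟨hdir, hlub⟩ := halg ⟨o, ho⟩
  have hsub : o ⊆ ⋃ V ∈ {x : {U : Set X // IsOpen U} |
      WB (fun U V : {U : Set X // IsOpen U} => U.1 ⊆ V.1) x x ∧ x.1 ⊆ o}, V.1 := by
    exact hlub.2 ⟨_, isOpen_biUnion fun V _ => V.2⟩ fun V hV => Set.subset_biUnion_of_mem hV
  obtain ⟨V, hVS, hzV⟩ := Set.mem_iUnion₂.mp (hsub hz)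
  exact ⟨V, hVS.1, hVS.2, hzV⟩

lemma cpt_inacc {K : {U : Set X // IsOpen U}}
    (hK : WB (fun U V : {U : Set X // IsOpen U} => U.1 ⊆ V.1) K K) {D : Set X} {s : X}
    (hD : DirOn (fun x y : X => sle y x) D) (hs : IsLubR (fun x y : X => sle y x) D s)
    (hsK : s ∉ K.1) (hDK : D ⊆ K.1) : False := by
  set em : X → {U : Set X // IsOpen U} :=
    fun a => ⟨(closure ({a} : Set X))ᶜ, isClosed_closure.isOpen_compl⟩ with hemdef
  have hKsub : K.1 ⊆ ⋃ a ∈ D, (closure ({a} : Set X))ᶜ := by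
    intro k hk
    by_contra hnk
    have hkd : ∀ a ∈ D, sle k a := by
      intro a ha
      by_contra hka
      exact hnk (Set.mem_biUnion ha hka)
    have hks : sle k s := hs.2 k hkd
    exact hsK (sle_mem_open K.2 hks hk)
  have hDir' : DirOn (fun U V : {U : Set X // IsOpen U} => U.1 ⊆ V.1) (em '' D) := by
    constructor
    · exact hD.1.image em
    · rintro a ⟨a1, ha1, rfl⟩ b ⟨a2, ha2, rfl⟩
      obtain ⟨c, hc, hc1, hc2⟩ := hD.2 a1 ha1 a2 ha2
      refine ⟨em c, ⟨c, hc, rfl⟩, ?_, ?_⟩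
      · exact Set.compl_subset_compl.mpr
          (closure_minimal (Set.singleton_subset_iff.mpr hc1) isClosed_closure)
      · exact Set.compl_subset_compl.mpr
          (closure_minimal (Set.singleton_subset_iff.mpr hc2) isClosed_closure)
  have hLub' : IsLubR (fun U V : {U : Set X // IsOpen U} => U.1 ⊆ V.1) (em '' D)
      ⟨⋃ a ∈ D, (closure ({a} : Set X))ᶜ,
        isOpen_biUnion fun a _ => isClosed_closure.isOpen_compl⟩ := by
    constructor
    · rintro a ⟨a1, ha1, rfl⟩
      exact Set.subset_biUnion_of_mem (u := fun a => (closure ({a} : Set X))ᶜ) ha1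
    · intro u hu
      exact Set.iUnion₂_subset fun a ha => hu (em a) ⟨a, ha, rfl⟩
  obtain ⟨W, hWmem, hKW⟩ := hK (em '' D) hDir' _ hLub' hKsub
  obtain ⟨a, ha, rfl⟩ := hWmem
  exact (hKW (hDK ha)) (subset_closure rfl)

lemma dirOn_singleton (x : X) : DirOn (fun x y : X => sle y x) {x} := by
  constructor
  · exact ⟨x, rfl⟩
  · intro a ha b hb
    rw [Set.mem_singleton_iff] at ha hb
    exact ⟨x, rfl, by rw [ha]; exact sle_refl' x, by rw [hb]; exact sle_refl' x⟩

lemma isLubR_singleton (x : X) : IsLubR (fun x y : X => sle y x) {x} x := by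
  constructor
  · intro a ha
    rw [Set.mem_singleton_iff] at ha
    subst ha
    exact sle_refl' a
  · intro u hu
    exact hu x rfl

lemma finfamc_clx_subset {x : X} {F : Finset X}
    (hF : F ∈ FinFamC (fun x y : X => sle y x) x) :
    closure ({x} : Set X) ⊆ UpS (fun x y : X => sle y x) (F : Set X) := by
  obtain ⟨dd, hdd, hddUp⟩ := hF.2 {x} (dirOn_singleton x) x (isLubR_singleton x)
    ⟨x, rfl, sle_refl' x⟩
  rw [Set.mem_singleton_iff] at hdd
  subst hdd
  intro z hz
  obtain ⟨f, hf, hxf⟩ := hddUp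
  exact ⟨f, hf, sle_trans' hz hxf⟩

lemma cocpt_FinFamC [T0Space X] [QuasiSober X] (hcnt : {U : Set X | IsOpen U}.Countable)
    (K : {U : Set X // IsOpen U})
    (hK : WB (fun U V : {U : Set X // IsOpen U} => U.1 ⊆ V.1) K K) :
    ∃ F : Finset X, UpS (fun x y : X => sle y x) (F : Set X) = K.1ᶜ ∧
      ∀ x ∉ K.1, F ∈ FinFamC (fun x y : X => sle y x) x := by
  have hAc : IsClosed K.1ᶜ := K.2.isClosed_compl
  have hfin := maxSpec_finite hcnt hAc
  have hcoe : (hfin.toFinset : Set X) = maxSpec K.1ᶜ := hfin.coe_toFinset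
  have hUp : UpS (fun x y : X => sle y x) (hfin.toFinset : Set X) = K.1ᶜ := by
    apply Set.Subset.antisymm
    · rintro z ⟨f, hf, hzf⟩
      rw [hcoe] at hf
      exact sle_mem_closed hAc hf.1 hzf
    · intro a ha
      obtain ⟨m, hm, ham⟩ := exists_max_spec hAc ha
      exact ⟨m, by rw [hcoe]; exact hm, ham⟩
  refine ⟨hfin.toFinset, hUp, ?_⟩
  intro x hx
  have hcore : ∀ s ∈ K.1ᶜ, ∀ D, DirOn (fun x y : X => sle y x) D →
      IsLubR (fun x y : X => sle y x) D s →
      ∃ dd ∈ D, dd ∈ UpS (fun x y : X => sle y x) (hfin.toFinset : Set X) := by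
    intro s hs D hD hlub
    by_contra hcon
    push_neg at hcon
    have hDK : D ⊆ K.1 := by
      intro dd hdd
      by_contra hddK
      exact hcon dd hdd (by rw [hUp]; exact hddK)
    exact cpt_inacc hK hD hlub hs hDK
  constructor
  · intro D hD s hlub hsUp
    exact hcore s (hUp ▸ hsUp) D hD hlub
  · intro D hD s hlub hsUp
    obtain ⟨x', hx', hsx⟩ := hsUp
    rw [Set.mem_singleton_iff] at hx'
    subst hx'
    exact hcore s (sle_mem_closed hAc hx hsx) D hD hlub

end StmtEightProofs
/-- If `X` is sober with countable, algebraic open set lattice,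
then `X` with the dual of the specialization order is a quasialgebraic poset. -/
theorem stmt8 {X : Type*} [TopologicalSpace X] [T0Space X] [QuasiSober X]
    (hcnt : {U : Set X | IsOpen U}.Countable)
    (halg : AlgebraicRel (fun U V : {U : Set X // IsOpen U} => U.1 ⊆ V.1)) :
    QuasialgebraicRel (fun x y : X => sle y x) := by
  intro x
  have hemptyWB : WB (fun U V : {U : Set X // IsOpen U} => U.1 ⊆ V.1)
      ⟨∅, isOpen_empty⟩ ⟨∅, isOpen_empty⟩ := by
    intro D hD s hs h
    obtain ⟨dd, hdd⟩ := hD.1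
    exact ⟨dd, hdd, Set.empty_subset _⟩
  obtain ⟨F0, hF0Up, hF0mem⟩ := cocpt_FinFamC hcnt ⟨∅, isOpen_empty⟩ hemptyWB
  constructor
  · constructor
    · exact ⟨F0, hF0mem x (Set.notMem_empty x)⟩
    · intro F hF G hG
      set A := UpS (fun x y : X => sle y x) (F : Set X) ∩
        UpS (fun x y : X => sle y x) (G : Set X) with hAdef
      have hAc : IsClosed A :=
        (isClosed_UpS F.finite_toSet).inter (isClosed_UpS G.finite_toSet)
      have hfin := maxSpec_finite hcnt hAc
      have hcoe : (hfin.toFinset : Set X) = maxSpec A := hfin.coe_toFinset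
      have hAsub : ∀ z ∈ A, z ∈ UpS (fun x y : X => sle y x) (hfin.toFinset : Set X) := by
        intro z hz
        obtain ⟨m, hm, hzm⟩ := exists_max_spec hAc hz
        exact ⟨m, by rw [hcoe]; exact hm, hzm⟩
      have hUpA : UpS (fun x y : X => sle y x) (hfin.toFinset : Set X) ⊆ A := by
        rintro z ⟨m, hm, hzm⟩
        rw [hcoe] at hm
        exact sle_mem_closed hAc hm.1 hzm
      have hcore : ∀ s ∈ A, ∀ D, DirOn (fun x y : X => sle y x) D →
          IsLubR (fun x y : X => sle y x) D s →
          ∃ dd ∈ D, dd ∈ UpS (fun x y : X => sle y x) (hfin.toFinset : Set X) := by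
        intro s hs D hD hlub
        obtain ⟨d1, hd1, hd1F⟩ := hF.1 D hD s hlub hs.1
        obtain ⟨d2, hd2, hd2G⟩ := hG.1 D hD s hlub hs.2
        obtain ⟨c, hc, hcd1, hcd2⟩ := hD.2 d1 hd1 d2 hd2
        have hcA : c ∈ A := by
          obtain ⟨f, hf, hdf⟩ := hd1F
          obtain ⟨g', hg', hdg⟩ := hd2G
          exact ⟨⟨f, hf, sle_trans' hcd1 hdf⟩, ⟨g', hg', sle_trans' hcd2 hdg⟩⟩
        exact ⟨c, hc, hAsub c hcA⟩
      refine ⟨hfin.toFinset, ⟨?_, ?_⟩, ?_, ?_⟩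
      · intro D hD s hlub hsUp
        exact hcore s (hUpA hsUp) D hD hlub
      · intro D hD s hlub hsUp
        obtain ⟨x', hx', hsx⟩ := hsUp
        rw [Set.mem_singleton_iff] at hx'
        subst hx'
        have hsA : s ∈ A :=
          ⟨finfamc_clx_subset hF hsx, finfamc_clx_subset hG hsx⟩
        exact hcore s hsA D hD hlub
      · intro h hh
        rw [hcoe] at hh
        exact hh.1.1
      · intro h hh
        rw [hcoe] at hh
        exact hh.1.2
  · apply Set.Subset.antisymm
    · intro z hz
      refine Set.mem_iInter₂.mpr fun F hF => ?_
      obtain ⟨x', hx', hzx⟩ := hz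
      rw [Set.mem_singleton_iff] at hx'
      subst hx'
      exact finfamc_clx_subset hF hzx
    · intro z hz
      by_contra hzx
      have hz_ncl : z ∉ closure ({x} : Set X) := fun h => hzx ⟨x, rfl, h⟩
      obtain ⟨o, ho, hzo, hxo⟩ : ∃ o : Set X, IsOpen o ∧ z ∈ o ∧ x ∉ o := by
        by_contra h
        push_neg at h
        exact hz_ncl (mem_closure_iff.mpr fun o ho hzo => ⟨x, h o ho hzo, rfl⟩)
      obtain ⟨K, hKWB, hKo, hzK⟩ := exists_cpt_nbhd halg ho hzo
      obtain ⟨FK, hFKUp, hFKmem⟩ := cocpt_FinFamC hcnt K hKWB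
      have hxK : x ∉ K.1 := fun h => hxo (hKo h)
      have hzmem := Set.mem_iInter₂.mp hz FK (hFKmem x hxK)
      rw [hFKUp] at hzmem
      exact hzmem hzK
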